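/- Let n ≥ 2, 1 ≤ k ≤ n−1 and 1 ≤ i ≤ n−1. Let σ be a permutation of {1,…,n} with σ(k) = k and σ(k+1) = k+1, and set w = σ ∘ τ^{n,k}_{i,i+1}. Then (k,k+1) ∘ w = w ∘ (i,i+1), and inv((k,k+1) ∘ w) = inv(w) + 1. -/

import Mathlib

/-- `IsTau k hk i j w` says that the permutation `w` of `{0,…,n-1}` satisfies
`w i = k`, `w j = k+1`, and `w` is strictly increasing on the complement of `{i, j}`.
(This is the defining property of `τ^{n,k}_{i,j}`, in 0-indexed form.) -/
def IsTau {n : ℕ} (k : ℕ) (hk : k + 1 < n) (i j : Fin n) (w : Equiv.Perm (Fin n)) : Prop :=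
  w i = ⟨k, Nat.lt_of_succ_lt hk⟩ ∧ w j = ⟨k + 1, hk⟩ ∧
    ∀ s t : Fin n, s < t → s ≠ i → s ≠ j → t ≠ i → t ≠ j → w s < w t

/-- The number of inversions of a permutation `w`:
`#{(s,t) : s < t and w s > w t}`; it equals the Coxeter length of `w`. -/
def inversions {n : ℕ} (w : Equiv.Perm (Fin n)) : ℕ :=
  (Finset.univ.filter (fun p : Fin n × Fin n => p.1 < p.2 ∧ w p.2 < w p.1)).card

lemma swap_lt_aux {n : ℕ} (a b : Fin n) (hab : (a : ℕ) + 1 = b) (x y : Fin n) :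
    Equiv.swap a b y < Equiv.swap a b x ↔
      ((y < x ∧ ¬(y = a ∧ x = b)) ∨ (y = b ∧ x = a)) := by
  have hval : ∀ z : Fin n, ((Equiv.swap a b z : Fin n) : ℕ) =
      if (z : ℕ) = a then (b : ℕ) else if (z : ℕ) = b then (a : ℕ) else (z : ℕ) := by
    intro z
    rcases eq_or_ne z a with h | h
    · rw [h, Equiv.swap_apply_left]; simp
    · rcases eq_or_ne z b with h2 | h2
      · rw [h2, Equiv.swap_apply_right]
        have : (b : ℕ) ≠ a := by omega
        simp [this]
      · rw [Equiv.swap_apply_of_ne_of_ne h h2]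
        have h' : (z : ℕ) ≠ a := fun hh => h (Fin.ext hh)
        have h2' : (z : ℕ) ≠ b := fun hh => h2 (Fin.ext hh)
        simp [h', h2']
  simp only [Fin.lt_def, Fin.ext_iff, hval]
  split_ifs <;> omega


/-- If `σ` fixes `k` and `k+1` and `w = σ ∘ τ^{n,k}_{i,i+1}` then
`(k,k+1) ∘ w = w ∘ (i,i+1)` and `inv((k,k+1) ∘ w) = inv(w) + 1`. -/
theorem stmt4 (n k i : ℕ) (hn : 2 ≤ n) (hk : k + 1 < n) (hi : i + 1 < n)
    (σ t : Equiv.Perm (Fin n))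
    (hσ1 : σ ⟨k, Nat.lt_of_succ_lt hk⟩ = ⟨k, Nat.lt_of_succ_lt hk⟩)
    (hσ2 : σ ⟨k + 1, hk⟩ = ⟨k + 1, hk⟩)
    (ht : IsTau k hk ⟨i, Nat.lt_of_succ_lt hi⟩ ⟨i + 1, hi⟩ t) :
    Equiv.swap ⟨k, Nat.lt_of_succ_lt hk⟩ ⟨k + 1, hk⟩ * (σ * t) =
      (σ * t) * Equiv.swap ⟨i, Nat.lt_of_succ_lt hi⟩ ⟨i + 1, hi⟩ ∧
    inversions (Equiv.swap ⟨k, Nat.lt_of_succ_lt hk⟩ ⟨k + 1, hk⟩ * (σ * t)) =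
      inversions (σ * t) + 1 := by
  obtain ⟨ht1, ht2, -⟩ := ht
  set a : Fin n := ⟨k, Nat.lt_of_succ_lt hk⟩ with ha
  set b : Fin n := ⟨k + 1, hk⟩ with hb
  set i1 : Fin n := ⟨i, Nat.lt_of_succ_lt hi⟩ with hi1
  set i2 : Fin n := ⟨i + 1, hi⟩ with hi2
  set w : Equiv.Perm (Fin n) := σ * t with hw
  have hab : (a : ℕ) + 1 = b := rfl
  have hwa : w i1 = a := by simp [hw, Equiv.Perm.mul_apply, ht1, hσ1]
  have hwb : w i2 = b := by simp [hw, Equiv.Perm.mul_apply, ht2, hσ2]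
  have hwae : ∀ x : Fin n, w x = a ↔ x = i1 := by
    intro x; rw [← hwa, w.injective.eq_iff]
  have hwbe : ∀ x : Fin n, w x = b ↔ x = i2 := by
    intro x; rw [← hwb, w.injective.eq_iff]
  constructor
  · ext x
    simp only [Equiv.Perm.mul_apply]
    rcases eq_or_ne x i1 with rfl | hx1
    · rw [Equiv.swap_apply_left, hwb, hwa, Equiv.swap_apply_left]
    · rcases eq_or_ne x i2 with rfl | hx2
      · rw [Equiv.swap_apply_right, hwa, hwb, Equiv.swap_apply_right]
      · rw [Equiv.swap_apply_of_ne_of_ne hx1 hx2,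
          Equiv.swap_apply_of_ne_of_ne (fun h => hx1 ((hwae x).1 h))
            (fun h => hx2 ((hwbe x).1 h))]
  · unfold inversions
    have hset : (Finset.univ.filter
        (fun p : Fin n × Fin n => p.1 < p.2 ∧ (Equiv.swap a b * w) p.2 < (Equiv.swap a b * w) p.1))
        = insert (i1, i2)
          (Finset.univ.filter (fun p : Fin n × Fin n => p.1 < p.2 ∧ w p.2 < w p.1)) := by
      ext ⟨s, u⟩
      rw [Finset.mem_filter, Finset.mem_insert, Finset.mem_filter]
      simp only [Finset.mem_filter, Finset.mem_univ, true_and, Finset.mem_insert,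
        Equiv.Perm.mul_apply, Prod.mk.injEq]
      rw [swap_lt_aux a b hab (w s) (w u)]
      constructor
      · rintro ⟨hsu, (⟨h1, h2⟩ | ⟨h1, h2⟩)⟩
        · right; exact ⟨hsu, h1⟩
        · left; exact ⟨(hwae s).1 h2, (hwbe u).1 h1⟩
      · rintro (⟨rfl, rfl⟩ | ⟨hsu, h⟩)
        · refine ⟨?_, Or.inr ⟨hwb, hwa⟩⟩
          simp [hi1, hi2, Fin.lt_def]
        · refine ⟨hsu, Or.inl ⟨h, ?_⟩⟩
          rintro ⟨h1, h2⟩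
          rw [hwae] at h1; rw [hwbe] at h2
          subst h1; subst h2
          simp [hi1, hi2, Fin.lt_def] at hsu
    rw [hset, Finset.card_insert_of_notMem]
    simp only [Finset.mem_filter, Finset.mem_univ, true_and, not_and, hwa, hwb]
    intro _
    simp [ha, hb, Fin.lt_def]
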